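/- arXiv:1512.01180 — 3 statements merged into one kernel-verified Lean document; each statement's English description precedes it below -/
import Mathlib

section
/- For fixed t ∈ (0,1), the function λ ↦ π_λ(t) = (exp(λt) − 1)/(exp(λ) − 1) (extended by π_0(t) = t) is strictly decreasing in λ ∈ ℝ. -/
open Set Real

noncomputable def piExt (l t : ℝ) : ℝ :=
  if l = 0 then t else (Real.exp (l * t) - 1) / (Real.exp l - 1)

namespace PiExtAux

variable {t : ℝ}

/-- Auxiliary function `M l = exp (-(l*t)) - t * exp (-l) - (1 - t)`. -/
noncomputable def M (t l : ℝ) : ℝ := Real.exp (-(l * t)) - t * Real.exp (-l) - (1 - t)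

lemma hasDerivAt_M (t l : ℝ) :
    HasDerivAt (M t) (t * (Real.exp (-l) - Real.exp (-(l * t)))) l := by
  have h1 : HasDerivAt (fun l : ℝ => Real.exp (-(l * t))) (-t * Real.exp (-(l * t))) l := by
    have := (Real.hasDerivAt_exp (-(l * t))).comp l
      (((hasDerivAt_id l).mul_const t).neg)
    simpa [mul_comm, Function.comp_def, Pi.neg_def] using this
  have h2 : HasDerivAt (fun l : ℝ => t * Real.exp (-l)) (t * (-Real.exp (-l))) l := by
    have := (Real.hasDerivAt_exp (-l)).comp l ((hasDerivAt_id l).neg)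
    simpa using this.const_mul t
  have := (h1.sub h2).sub_const (1 - t)
  convert this using 1
  · rfl
  · rfl
  · rfl
  ring

lemma M_neg (ht : t ∈ Ioo (0:ℝ) 1) {l : ℝ} (hl : l ≠ 0) : M t l < 0 := by
  obtain ⟨ht0, ht1⟩ := ht
  have hM0 : M t 0 = 0 := by simp [M]
  rcases lt_or_gt_of_ne hl with hneg | hpos
  · -- l < 0 : M is strictly monotone on Iic 0
    have hmono : StrictMonoOn (M t) (Iic 0) := by
      apply strictMonoOn_of_deriv_pos (convex_Iic 0)
        (fun x _ => (hasDerivAt_M t x).continuousAt.continuousWithinAt)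
      intro x hx
      rw [interior_Iic] at hx
      have hx' : x < 0 := hx
      rw [(hasDerivAt_M t x).deriv]
      have : Real.exp (-(x * t)) < Real.exp (-x) := by
        apply Real.exp_lt_exp.2
        nlinarith
      nlinarith
    have := hmono (mem_Iic.2 (le_of_lt hneg)) (mem_Iic.2 le_rfl) hneg
    rwa [hM0] at this
  · -- l > 0 : M is strictly antitone on Ici 0
    have hanti : StrictAntiOn (M t) (Ici 0) := by
      apply strictAntiOn_of_deriv_neg (convex_Ici 0)
        (fun x _ => (hasDerivAt_M t x).continuousAt.continuousWithinAt)
      intro x hx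
      rw [interior_Ici] at hx
      have hx' : 0 < x := hx
      rw [(hasDerivAt_M t x).deriv]
      have : Real.exp (-x) < Real.exp (-(x * t)) := by
        apply Real.exp_lt_exp.2
        nlinarith
      nlinarith
    have := hanti (mem_Ici.2 le_rfl) (mem_Ici.2 (le_of_lt hpos)) hpos
    rwa [hM0] at this

/-- The quotient form of the function. -/
noncomputable def F (t l : ℝ) : ℝ := (Real.exp (l * t) - 1) / (Real.exp l - 1)

lemma exp_ne_one {l : ℝ} (hl : l ≠ 0) : Real.exp l ≠ 1 := by
  simpa [Real.exp_eq_one_iff] using hl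

lemma hasDerivAt_F (t : ℝ) {l : ℝ} (hl : l ≠ 0) :
    HasDerivAt (F t)
      ((t * Real.exp (l * t) * (Real.exp l - 1) - (Real.exp (l * t) - 1) * Real.exp l) /
        (Real.exp l - 1) ^ 2) l := by
  have hden : Real.exp l - 1 ≠ 0 := sub_ne_zero.2 (exp_ne_one hl)
  have h1 : HasDerivAt (fun l : ℝ => Real.exp (l * t) - 1) (t * Real.exp (l * t)) l := by
    have := (Real.hasDerivAt_exp (l * t)).comp l ((hasDerivAt_id l).mul_const t)
    simpa [mul_comm] using this.sub_const 1
  have h2 : HasDerivAt (fun l : ℝ => Real.exp l - 1) (Real.exp l) l :=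
    (Real.hasDerivAt_exp l).sub_const 1
  exact h1.div h2 hden

lemma deriv_F_neg (ht : t ∈ Ioo (0:ℝ) 1) {l : ℝ} (hl : l ≠ 0) : deriv (F t) l < 0 := by
  rw [(hasDerivAt_F t hl).deriv]
  apply div_neg_of_neg_of_pos
  · -- numerator = exp (l + l*t) * M t l
    have key : t * Real.exp (l * t) * (Real.exp l - 1) - (Real.exp (l * t) - 1) * Real.exp l
        = Real.exp (l + l * t) * M t l := by
      unfold M
      rw [Real.exp_add, Real.exp_neg, Real.exp_neg]
      have ha := Real.exp_ne_zero l
      have hb := Real.exp_ne_zero (l * t)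
      field_simp
      ring
    rw [key]
    exact mul_neg_of_pos_of_neg (Real.exp_pos _) (M_neg ht hl)
  · exact pow_two_pos_of_ne_zero (sub_ne_zero.2 (exp_ne_one hl))

lemma piExt_eq_F {l : ℝ} (hl : l ≠ 0) : piExt l t = F t l := by
  simp [piExt, F, hl]

lemma continuousAt_zero (ht : t ∈ Ioo (0:ℝ) 1) :
    ContinuousAt (fun l : ℝ => piExt l t) 0 := by
  have hF : Filter.Tendsto (F t) (nhdsWithin 0 {(0:ℝ)}ᶜ) (nhds t) := by
    have h1 : Filter.Tendsto (fun l : ℝ => (Real.exp (l * t) - 1) / l)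
        (nhdsWithin 0 {(0:ℝ)}ᶜ) (nhds t) := by
      have hd : HasDerivAt (fun l : ℝ => Real.exp (l * t)) t 0 := by
        have := (Real.hasDerivAt_exp (0 * t)).comp 0 ((hasDerivAt_id 0).mul_const t)
        simpa [mul_comm, Function.comp_def] using this
      have := hasDerivAt_iff_tendsto_slope.1 hd
      apply this.congr'
      filter_upwards [self_mem_nhdsWithin] with x hx
      simp [slope_def_field]
    have h2 : Filter.Tendsto (fun l : ℝ => (Real.exp l - 1) / l)
        (nhdsWithin 0 {(0:ℝ)}ᶜ) (nhds 1) := by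
      have hd : HasDerivAt Real.exp 1 0 := by
        simpa using Real.hasDerivAt_exp 0
      have := hasDerivAt_iff_tendsto_slope.1 hd
      apply this.congr'
      filter_upwards [self_mem_nhdsWithin] with x hx
      simp [slope_def_field]
    have := h1.div h2 one_ne_zero
    rw [div_one] at this
    apply this.congr'
    filter_upwards [self_mem_nhdsWithin] with x hx
    have hx' : (x:ℝ) ≠ 0 := hx
    unfold F
    rw [Pi.div_apply]
    field_simp
  have hpi : Filter.Tendsto (fun l : ℝ => piExt l t) (nhdsWithin 0 {(0:ℝ)}ᶜ) (nhds t) := by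
    apply hF.congr'
    filter_upwards [self_mem_nhdsWithin] with x hx
    exact (piExt_eq_F hx).symm
  have h0 : piExt 0 t = t := by simp [piExt]
  rw [ContinuousAt, h0, ← nhdsNE_sup_pure (0:ℝ)]
  rw [Filter.tendsto_sup]
  exact ⟨hpi, by simpa [h0] using tendsto_pure_nhds (fun l : ℝ => piExt l t) 0⟩

lemma continuous_piExt (ht : t ∈ Ioo (0:ℝ) 1) :
    Continuous (fun l : ℝ => piExt l t) := by
  rw [continuous_iff_continuousAt]
  intro x
  rcases eq_or_ne x 0 with rfl | hx
  · exact continuousAt_zero ht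
  · have hFc : ContinuousAt (F t) x := (hasDerivAt_F t hx).continuousAt
    apply hFc.congr
    have : {l : ℝ | l ≠ 0} ∈ nhds x := by
      exact IsOpen.mem_nhds (isOpen_compl_singleton) hx
    filter_upwards [this] with y hy
    exact (piExt_eq_F hy).symm

lemma deriv_piExt_neg (ht : t ∈ Ioo (0:ℝ) 1) {l : ℝ} (hl : l ≠ 0) :
    deriv (fun l : ℝ => piExt l t) l < 0 := by
  have heq : deriv (fun l : ℝ => piExt l t) l = deriv (F t) l := by
    apply Filter.EventuallyEq.deriv_eq
    have : {l : ℝ | l ≠ 0} ∈ nhds l := IsOpen.mem_nhds isOpen_compl_singleton hl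
    filter_upwards [this] with y hy
    exact piExt_eq_F hy
  rw [heq]
  exact deriv_F_neg ht hl

end PiExtAux

theorem stmt_3 (t : ℝ) (ht : t ∈ Ioo (0:ℝ) 1) :
    StrictAnti (fun l : ℝ => piExt l t) := by
  have hc := PiExtAux.continuous_piExt ht
  have hIic : StrictAntiOn (fun l : ℝ => piExt l t) (Iic 0) := by
    apply strictAntiOn_of_deriv_neg (convex_Iic 0) hc.continuousOn
    intro x hx
    rw [interior_Iic] at hx
    exact PiExtAux.deriv_piExt_neg ht (ne_of_lt hx)
  have hIci : StrictAntiOn (fun l : ℝ => piExt l t) (Ici 0) := by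
    apply strictAntiOn_of_deriv_neg (convex_Ici 0) hc.continuousOn
    intro x hx
    rw [interior_Ici] at hx
    exact PiExtAux.deriv_piExt_neg ht (ne_of_gt hx)
  intro a b hab
  rcases le_or_gt b 0 with hb | hb
  · exact hIic (le_of_lt (lt_of_lt_of_le hab hb)) hb hab
  · rcases le_or_gt 0 a with ha | ha
    · exact hIci ha (le_of_lt (lt_of_le_of_lt ha hab)) hab
    · calc piExt b t < piExt 0 t := hIci self_mem_Ici (le_of_lt hb) hb
        _ < piExt a t := hIic (mem_Iic.2 (le_of_lt ha)) self_mem_Iic ha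
end

section
/- Let λ ∈ ℝ, n ≥ 1, 1 ≤ i ≤ n, and t ∈ [0,1]. Let Δₙ = {(t₁,…,tₙ) ∈ [0,1]ⁿ : t₁ < t₂ < ⋯ < tₙ} and Z_λ = ∫_{Δₙ} exp(λ·Σⱼ tⱼ) dt. Then (1/Z_λ) ∫_{Δₙ ∩ {tᵢ ≤ t}} exp(λ·Σⱼ tⱼ) dt equals the probability that a binomial random variable with parameters n and π_λ(t) is at least i, where π_λ(t) = (exp(λt)−1)/(exp(λ)−1) (and π_0(t) = t). -/
open Set Real MeasureTheory

def orderedSimplex (n : ℕ) : Set (Fin n → ℝ) :=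
  {t | (∀ j, t j ∈ Set.Icc (0:ℝ) 1) ∧ StrictMono t}

lemma null_noninj (n : ℕ) :
    volume {s : Fin n → ℝ | ¬ Function.Injective s} = 0 := by
  have : {s : Fin n → ℝ | ¬ Function.Injective s} ⊆
      ⋃ (p : Fin n × Fin n) (_ : p.1 ≠ p.2), {s : Fin n → ℝ | s p.1 = s p.2} := by
    intro s hs
    simp only [Function.Injective, not_forall] at hs
    obtain ⟨a, b, hab, hne⟩ := hs
    exact mem_iUnion₂.2 ⟨(a, b), hne, hab⟩
  refine measure_mono_null this ?_
  refine measure_iUnion_null fun p => measure_iUnion_null fun hne => ?_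
  have : {s : Fin n → ℝ | s p.1 = s p.2} =
      (LinearMap.ker ((LinearMap.proj p.1 : (Fin n → ℝ) →ₗ[ℝ] ℝ) - LinearMap.proj p.2) : Set (Fin n → ℝ)) := by
    ext s
    simp [LinearMap.mem_ker, sub_eq_zero]
  rw [this]
  refine Measure.addHaar_submodule _ _ ?_
  intro h
  have : (Pi.single p.1 1 : Fin n → ℝ) ∈ (⊤ : Submodule ℝ (Fin n → ℝ)) := trivial
  rw [← h, LinearMap.mem_ker] at this
  simp [Pi.single_apply, hne, hne.symm] at this

lemma symint (n : ℕ) (g : (Fin n → ℝ) → ℝ)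
    (hsym : ∀ (σ : Equiv.Perm (Fin n)) s, g (s ∘ σ) = g s)
    (hint : IntegrableOn g (univ.pi fun _ : Fin n => Icc (0:ℝ) 1)) :
    ∫ s in (univ.pi fun _ : Fin n => Icc (0:ℝ) 1), g s
      = (n.factorial : ℝ) * ∫ s in orderedSimplex n, g s := by
  classical
  set B := univ.pi fun _ : Fin n => Icc (0:ℝ) 1 with hB
  have hBmeas : MeasurableSet B := MeasurableSet.univ_pi fun _ => measurableSet_Icc
  set C : Equiv.Perm (Fin n) → Set (Fin n → ℝ) :=
    fun σ => B ∩ {s | StrictMono (s ∘ σ)} with hC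
  have hSMmeas : ∀ σ : Equiv.Perm (Fin n), MeasurableSet {s : Fin n → ℝ | StrictMono (s ∘ σ)} := by
    intro σ
    have : {s : Fin n → ℝ | StrictMono (s ∘ σ)}
        = ⋂ (j : Fin n), ⋂ (k : Fin n), ⋂ (_ : j < k), {s : Fin n → ℝ | s (σ j) < s (σ k)} := by
      ext s
      simp only [mem_iInter, mem_setOf_eq]
      constructor
      · intro h j k hjk; exact h hjk
      · intro h j k hjk; exact h j k hjk
    rw [this]
    exact MeasurableSet.iInter fun j => MeasurableSet.iInter fun k => MeasurableSet.iInter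
      fun _ => measurableSet_lt (measurable_pi_apply _) (measurable_pi_apply _)
  have hCmeas : ∀ σ, MeasurableSet (C σ) := fun σ => hBmeas.inter (hSMmeas σ)
  have hsub : (⋃ σ, C σ) ⊆ B := by
    intro s hs; obtain ⟨σ, hσ⟩ := mem_iUnion.1 hs; exact hσ.1
  have hcov : B \ (⋃ σ, C σ) ⊆ {s : Fin n → ℝ | ¬ Function.Injective s} := by
    intro s hs
    simp only [mem_setOf_eq]
    intro hinj
    apply hs.2
    refine mem_iUnion.2 ⟨Tuple.sort s, hs.1, ?_⟩
    have hmono : Monotone (s ∘ Tuple.sort s) := Tuple.monotone_sort s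
    exact hmono.strictMono_of_injective (hinj.comp (Tuple.sort s).injective)
  have hae : B =ᵐ[volume] ⋃ σ, C σ := by
    rw [MeasureTheory.ae_eq_set]
    refine ⟨measure_mono_null hcov (null_noninj n), ?_⟩
    rw [diff_eq_empty.2 hsub]; simp
  have hdisj : Pairwise (Function.onFun (AEDisjoint volume) C) := by
    intro σ τ hne
    refine measure_mono_null ?_ (null_noninj n)
    intro s hs
    simp only [mem_inter_iff] at hs
    simp only [mem_setOf_eq]
    intro hinj
    apply hne
    have h1 : StrictMono (s ∘ σ) := hs.1.2
    have h2 : StrictMono (s ∘ τ) := hs.2.2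
    have hr : Set.range (s ∘ ⇑σ) = Set.range (s ∘ ⇑τ) := by
      rw [Set.range_comp, Set.range_comp, σ.range_eq_univ, τ.range_eq_univ]
    have hwf : WellFoundedLT (Fin n) := inferInstance
    have := (h1.range_inj h2).1 hr
    exact Equiv.ext fun j => hinj (congrFun this j)
  have key : ∀ σ : Equiv.Perm (Fin n), ∫ s in C σ, g s = ∫ s in orderedSimplex n, g s := by
    intro σ
    set φ : (Fin n → ℝ) ≃ᵐ (Fin n → ℝ) := MeasurableEquiv.piCongrLeft (fun _ => ℝ) σ with hφdef
    have hφ : MeasurePreserving φ volume volume := volume_measurePreserving_piCongrLeft _ σ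
    have happ : ∀ (x : Fin n → ℝ) i, φ x i = x (σ.symm i) := by
      intro x i
      have : φ x (σ (σ.symm i)) = x (σ.symm i) := by
        simp only [hφdef, MeasurableEquiv.coe_piCongrLeft]
        exact Equiv.piCongrLeft_apply_apply (fun _ => ℝ) σ x (σ.symm i)
      simpa using this
    have hcomp : ∀ (x : Fin n → ℝ), φ x = x ∘ ⇑σ.symm := fun x => funext fun i => happ x i
    have h1 : ∫ x in φ ⁻¹' (C σ), g (φ x) = ∫ y in C σ, g y :=
      hφ.setIntegral_preimage_emb φ.measurableEmbedding g (C σ)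
    have hpre : φ ⁻¹' (C σ) = orderedSimplex n := by
      ext x
      simp only [mem_preimage, hC, mem_inter_iff, mem_setOf_eq, orderedSimplex, hB, mem_pi,
        mem_univ, forall_true_left]
      constructor
      · rintro ⟨hb, hm⟩
        refine ⟨fun j => by simpa [happ] using hb (σ j), ?_⟩
        have : (φ x ∘ ⇑σ) = x := funext fun j => by simp [happ]
        rwa [this] at hm
      · rintro ⟨hb, hm⟩
        refine ⟨fun j => by simp [happ, hb], ?_⟩
        have : (φ x ∘ ⇑σ) = x := funext fun j => by simp [happ]
        rw [this]; exact hm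
    have hgφ : ∀ x, g (φ x) = g x := by
      intro x; rw [hcomp]; exact hsym σ.symm x
    rw [hpre] at h1
    rw [← h1]
    exact integral_congr_ae (Filter.Eventually.of_forall fun x => (hgφ x).symm) |>.symm
  calc ∫ s in B, g s = ∫ s in ⋃ σ, C σ, g s := setIntegral_congr_set hae
    _ = ∑' σ, ∫ s in C σ, g s := integral_iUnion_ae
        (fun σ => (hCmeas σ).nullMeasurableSet) hdisj (hint.mono_set hsub)
    _ = ∑ σ : Equiv.Perm (Fin n), ∫ s in C σ, g s := tsum_fintype _
    _ = ∑ σ : Equiv.Perm (Fin n), ∫ s in orderedSimplex n, g s := by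
        exact Finset.sum_congr rfl fun σ _ => key σ
    _ = (n.factorial : ℝ) * ∫ s in orderedSimplex n, g s := by
        rw [Finset.sum_const, Finset.card_univ, Fintype.card_perm, Fintype.card_fin,
          nsmul_eq_mul]

lemma measS (n i : ℕ) (t : ℝ) :
    MeasurableSet {s : Fin n → ℝ | i ≤ (Finset.univ.filter (fun j => s j ≤ t)).card} := by
  classical
  have : {s : Fin n → ℝ | i ≤ (Finset.univ.filter (fun j => s j ≤ t)).card}
      = ⋃ (T : Finset (Fin n)) (_ : T.card = i), ⋂ (j : Fin n) (_ : j ∈ T), {s : Fin n → ℝ | s j ≤ t} := by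
    ext s
    simp only [mem_setOf_eq, mem_iUnion, mem_iInter]
    constructor
    · intro h
      obtain ⟨T, hTsub, hTcard⟩ := Finset.exists_subset_card_eq h
      exact ⟨T, hTcard, fun j hj => (Finset.mem_filter.1 (hTsub hj)).2⟩
    · rintro ⟨T, hTcard, hT⟩
      calc i = T.card := hTcard.symm
        _ ≤ _ := Finset.card_le_card fun j hj => Finset.mem_filter.2 ⟨Finset.mem_univ j, hT j hj⟩
  rw [this]
  exact MeasurableSet.iUnion fun T => MeasurableSet.iUnion fun _ =>
    MeasurableSet.iInter fun j => MeasurableSet.iInter fun _ =>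
      measurableSet_le (measurable_pi_apply j) measurable_const

lemma seteq_aux (n i : ℕ) (hi : 1 ≤ i) (hin : i ≤ n) (t : ℝ)
    (s : Fin n → ℝ) (hs : StrictMono s) :
    (s ⟨i - 1, Nat.sub_one_lt_of_le hi hin⟩ ≤ t ↔ i ≤ (Finset.univ.filter (fun j => s j ≤ t)).card) := by
  classical
  constructor
  · intro h
    have hsub : Finset.Iic (⟨i - 1, by omega⟩ : Fin n) ⊆
        Finset.univ.filter (fun j => s j ≤ t) := by
      intro j hj
      rw [Finset.mem_Iic] at hj
      exact Finset.mem_filter.2 ⟨Finset.mem_univ _, le_trans (hs.monotone hj) h⟩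
    have := Finset.card_le_card hsub
    rw [Fin.card_Iic] at this
    simp only [] at this
    omega
  · intro h
    by_contra hlt
    push_neg at hlt
    have hsub : Finset.univ.filter (fun j => s j ≤ t) ⊆
        Finset.Iio (⟨i - 1, by omega⟩ : Fin n) := by
      intro j hj
      rw [Finset.mem_Iio]
      by_contra hge
      push_neg at hge
      exact absurd (le_trans (hs.monotone hge) (Finset.mem_filter.1 hj).2) (not_le.2 hlt)
    have := Finset.card_le_card hsub
    rw [Fin.card_Iio] at this
    simp only [] at this
    omega

lemma pointwise_decomp (l : ℝ) (n i : ℕ) (t : ℝ) (ht0 : 0 ≤ t) (ht1 : t ≤ 1) (s : Fin n → ℝ) :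
    (univ.pi fun _ : Fin n => Icc (0:ℝ) 1).indicator
      ({s : Fin n → ℝ | i ≤ (Finset.univ.filter (fun j => s j ≤ t)).card}.indicator
        (fun s => Real.exp (l * ∑ j, s j))) s
    = ∑ k ∈ Finset.Icc i n, ∑ T ∈ Finset.powersetCard k Finset.univ,
        ∏ j, (if j ∈ T then (Icc (0:ℝ) t).indicator (fun y => Real.exp (l * y)) (s j)
              else (Ioc t (1:ℝ)).indicator (fun y => Real.exp (l * y)) (s j)) := by
  classical
  set T₀ : Finset (Fin n) := Finset.univ.filter (fun j => s j ≤ t) with hT₀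
  have claimA : ∀ T : Finset (Fin n),
      (∏ j, (if j ∈ T then (Icc (0:ℝ) t).indicator (fun y => Real.exp (l * y)) (s j)
              else (Ioc t (1:ℝ)).indicator (fun y => Real.exp (l * y)) (s j)))
      = if T = T₀ ∧ (∀ j, s j ∈ Icc (0:ℝ) 1) then Real.exp (l * ∑ j, s j) else 0 := by
    intro T
    by_cases hcond : T = T₀ ∧ (∀ j, s j ∈ Icc (0:ℝ) 1)
    · rw [if_pos hcond]
      obtain ⟨hTT, hbox⟩ := hcond
      have hfac : ∀ j, (if j ∈ T then (Icc (0:ℝ) t).indicator (fun y => Real.exp (l * y)) (s j)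
              else (Ioc t (1:ℝ)).indicator (fun y => Real.exp (l * y)) (s j))
          = Real.exp (l * s j) := by
        intro j
        by_cases hj : j ∈ T
        · rw [if_pos hj]
          have hjT₀ : s j ≤ t := by
            have := hTT ▸ hj
            exact (Finset.mem_filter.1 this).2
          rw [indicator_of_mem (Set.mem_Icc.2 ⟨(hbox j).1, hjT₀⟩)]
        · rw [if_neg hj]
          have hjT₀ : ¬ s j ≤ t := by
            intro hle
            exact hj (hTT ▸ Finset.mem_filter.2 ⟨Finset.mem_univ _, hle⟩)
          rw [indicator_of_mem (Set.mem_Ioc.2 ⟨lt_of_not_ge hjT₀, (hbox j).2⟩)]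
      rw [Finset.prod_congr rfl fun j _ => hfac j, ← Real.exp_sum, Finset.mul_sum]
    · rw [if_neg hcond]
      rw [not_and_or] at hcond
      rcases hcond with hTT | hbox
      · have : ∃ j, (if j ∈ T then (Icc (0:ℝ) t).indicator (fun y => Real.exp (l * y)) (s j)
              else (Ioc t (1:ℝ)).indicator (fun y => Real.exp (l * y)) (s j)) = 0 := by
          have : ∃ j, ¬ (j ∈ T ↔ j ∈ T₀) := by
            by_contra hall
            push_neg at hall
            exact hTT (Finset.ext fun j => hall j)
          obtain ⟨j, hj⟩ := this
          refine ⟨j, ?_⟩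
          have hj' : (j ∈ T ∧ j ∉ T₀) ∨ (j ∈ T₀ ∧ j ∉ T) := by tauto
          rcases hj' with ⟨hjT, hjT₀⟩ | ⟨hjT₀, hjT⟩
          · rw [if_pos hjT]
            have : ¬ s j ≤ t := fun hle => hjT₀ (Finset.mem_filter.2 ⟨Finset.mem_univ _, hle⟩)
            exact indicator_of_notMem (fun hm => this hm.2) _
          · rw [if_neg hjT]
            have : s j ≤ t := (Finset.mem_filter.1 hjT₀).2
            exact indicator_of_notMem (fun hm => (not_lt.2 this) hm.1) _
        obtain ⟨j, hj⟩ := this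
        exact Finset.prod_eq_zero (Finset.mem_univ j) hj
      · push_neg at hbox
        obtain ⟨j, hj⟩ := hbox
        refine Finset.prod_eq_zero (Finset.mem_univ j) ?_
        by_cases hjT : j ∈ T
        · rw [if_pos hjT]
          refine indicator_of_notMem (fun hm => hj ⟨hm.1, le_trans hm.2 ht1⟩) _
        · rw [if_neg hjT]
          refine indicator_of_notMem (fun hm => hj ⟨le_trans ht0 (le_of_lt hm.1), hm.2⟩) _
  rw [Finset.sum_congr rfl fun k _ => Finset.sum_congr rfl fun T _ => claimA T]
  by_cases hbox : ∀ j, s j ∈ Icc (0:ℝ) 1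
  · rw [indicator_of_mem (Set.mem_univ_pi.2 hbox)]
    by_cases hcard : i ≤ T₀.card
    · rw [indicator_of_mem (show s ∈ {s : Fin n → ℝ | i ≤ (Finset.univ.filter (fun j => s j ≤ t)).card} from hcard)]
      have hkmem : T₀.card ∈ Finset.Icc i n := by
        rw [Finset.mem_Icc]
        exact ⟨hcard, le_trans (Finset.card_le_card (Finset.subset_univ _)) (by simp)⟩
      rw [Finset.sum_eq_single T₀.card]
      · rw [Finset.sum_eq_single T₀]
        · rw [if_pos ⟨rfl, hbox⟩]
        · intro T hT hne; rw [if_neg (fun h => hne h.1)]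
        · intro habs
          exact absurd (Finset.mem_powersetCard.2 ⟨Finset.subset_univ _, rfl⟩) habs
      · intro k hk hne
        refine Finset.sum_eq_zero fun T hT => ?_
        rw [Finset.mem_powersetCard] at hT
        refine if_neg fun h => hne ?_
        rw [← hT.2, h.1]
      · intro habs; exact absurd hkmem habs
    · rw [indicator_of_notMem (show s ∉ {s : Fin n → ℝ | i ≤ (Finset.univ.filter (fun j => s j ≤ t)).card} from hcard)]
      refine (Finset.sum_eq_zero fun k hk => Finset.sum_eq_zero fun T hT => ?_).symm
      rw [Finset.mem_powersetCard] at hT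
      rw [Finset.mem_Icc] at hk
      refine if_neg fun h => hcard ?_
      rw [← h.1]; rw [hT.2]; exact hk.1
  · rw [indicator_of_notMem (fun hm => hbox (Set.mem_univ_pi.1 hm))]
    refine (Finset.sum_eq_zero fun k hk => Finset.sum_eq_zero fun T hT => ?_).symm
    exact if_neg fun h => hbox h.2

lemma prod_integral (l t : ℝ) (n : ℕ) (T : Finset (Fin n)) :
    (∫ s : Fin n → ℝ, ∏ j, (if j ∈ T then (Icc (0:ℝ) t).indicator (fun y => Real.exp (l * y)) (s j)
              else (Ioc t (1:ℝ)).indicator (fun y => Real.exp (l * y)) (s j)))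
    = (∫ x in Icc (0:ℝ) t, Real.exp (l * x)) ^ T.card *
      (∫ x in Ioc t (1:ℝ), Real.exp (l * x)) ^ (n - T.card) := by
  classical
  have hrw : ∀ (s : Fin n → ℝ) (j : Fin n),
      (if j ∈ T then (Icc (0:ℝ) t).indicator (fun y => Real.exp (l * y)) (s j)
              else (Ioc t (1:ℝ)).indicator (fun y => Real.exp (l * y)) (s j))
      = (if j ∈ T then (Icc (0:ℝ) t).indicator (fun y => Real.exp (l * y))
              else (Ioc t (1:ℝ)).indicator (fun y => Real.exp (l * y))) (s j) := by
    intro s j; by_cases hj : j ∈ T <;> simp [hj]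
  simp_rw [hrw]
  rw [volume_pi (α := fun _ : Fin n => ℝ), MeasureTheory.integral_fintype_prod_eq_prod (ι := Fin n)
    (f := fun j => (if j ∈ T then (Icc (0:ℝ) t).indicator (fun y => Real.exp (l * y))
              else (Ioc t (1:ℝ)).indicator (fun y => Real.exp (l * y))))]
  have : ∀ j : Fin n, (∫ x, (if j ∈ T then (Icc (0:ℝ) t).indicator (fun y => Real.exp (l * y))
              else (Ioc t (1:ℝ)).indicator (fun y => Real.exp (l * y))) x)
      = if j ∈ T then ∫ x in Icc (0:ℝ) t, Real.exp (l * x) else ∫ x in Ioc t (1:ℝ), Real.exp (l * x) := by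
    intro j
    by_cases hj : j ∈ T
    · simp only [hj, if_true]; rw [integral_indicator measurableSet_Icc]
    · simp only [hj, if_false]; rw [integral_indicator measurableSet_Ioc]
  rw [Finset.prod_congr rfl fun j _ => this j]
  have hpw : (∏ j : Fin n, if j ∈ T then ∫ x in Icc (0:ℝ) t, Real.exp (l * x)
        else ∫ x in Ioc t (1:ℝ), Real.exp (l * x))
      = ∏ j : Fin n, T.piecewise (fun _ => ∫ x in Icc (0:ℝ) t, Real.exp (l * x))
          (fun _ => ∫ x in Ioc t (1:ℝ), Real.exp (l * x)) j := by
    refine Finset.prod_congr rfl fun j _ => ?_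
    simp [Finset.piecewise]
  rw [hpw, Finset.prod_piecewise, Finset.prod_const, Finset.prod_const, Finset.univ_inter,
    ← Finset.compl_eq_univ_sdiff, Finset.card_compl, Fintype.card_fin]

lemma a_val (l t : ℝ) (ht0 : 0 ≤ t) :
    ∫ x in Icc (0:ℝ) t, Real.exp (l * x) = if l = 0 then t else (Real.exp (l*t) - 1)/l := by
  rw [MeasureTheory.integral_Icc_eq_integral_Ioc,
    ← intervalIntegral.integral_of_le ht0]
  by_cases hl : l = 0
  · simp [hl]
  · rw [if_neg hl]
    have : ∫ x in (0:ℝ)..t, Real.exp (l * x) = l⁻¹ • ∫ x in (l*0)..(l*t), Real.exp x := by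
      rw [intervalIntegral.integral_comp_mul_left (fun y => Real.exp y) hl]
    rw [this, integral_exp]
    simp [mul_zero, Real.exp_zero]
    ring

theorem stmt_5 (l : ℝ) (n : ℕ) (hn : 1 ≤ n) (i : ℕ) (hi : 1 ≤ i) (hin : i ≤ n)
    (t : ℝ) (ht : t ∈ Icc (0:ℝ) 1) :
    (1 / ∫ s in orderedSimplex n, Real.exp (l * ∑ j, s j)) *
      (∫ s in orderedSimplex n ∩ {s | s ⟨i - 1, by omega⟩ ≤ t},
        Real.exp (l * ∑ j, s j)) =
    ∑ k ∈ Finset.Icc i n,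
      (n.choose k : ℝ) * piExt l t ^ k * (1 - piExt l t) ^ (n - k) := by
  classical
  obtain ⟨ht0, ht1⟩ := ht
  set E : ℝ → ℝ := fun y => Real.exp (l * y) with hE
  set a := ∫ x in Icc (0:ℝ) t, E x with ha
  set b := ∫ x in Ioc t (1:ℝ), E x with hb
  set p := piExt l t with hp
  set B := univ.pi fun _ : Fin n => Icc (0:ℝ) 1 with hBdef
  set S := {s : Fin n → ℝ | i ≤ (Finset.univ.filter (fun j => s j ≤ t)).card} with hSdef
  set f : (Fin n → ℝ) → ℝ := fun s => Real.exp (l * ∑ j, s j) with hf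
  have hBmeas : MeasurableSet B := MeasurableSet.univ_pi fun _ => measurableSet_Icc
  have hSmeas : MeasurableSet S := measS n i t
  have hEcont : Continuous E := Real.continuous_exp.comp (continuous_const.mul continuous_id)
  have hfcont : Continuous f := Real.continuous_exp.comp
    (continuous_const.mul (continuous_finset_sum _ fun j _ => continuous_apply j))
  have hintB : IntegrableOn f B :=
    hfcont.continuousOn.integrableOn_compact' (isCompact_univ_pi fun _ => isCompact_Icc) hBmeas
  have hIccInt : IntegrableOn E (Icc (0:ℝ) t) := hEcont.integrableOn_Icc
  have hIocInt : IntegrableOn E (Ioc t (1:ℝ)) := hEcont.integrableOn_Ioc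
  have hsym_f : ∀ (σ : Equiv.Perm (Fin n)) s, f (s ∘ σ) = f s := by
    intro σ s
    simp only [hf, Function.comp_apply]
    rw [Equiv.sum_comp σ (fun j => s j)]
  have hsymS : ∀ (σ : Equiv.Perm (Fin n)) s, ((s ∘ σ) ∈ S ↔ s ∈ S) := by
    intro σ s
    simp only [hSdef, mem_setOf_eq, Function.comp_apply]
    have : (Finset.univ.filter (fun j => s (σ j) ≤ t)).card
        = (Finset.univ.filter (fun j => s j ≤ t)).card := by
      refine Finset.card_bij (fun j _ => σ j) ?_ ?_ ?_
      · intro j hj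
        exact Finset.mem_filter.2 ⟨Finset.mem_univ _, (Finset.mem_filter.1 hj).2⟩
      · intro j₁ _ j₂ _ h; exact σ.injective h
      · intro k hk
        exact ⟨σ.symm k, Finset.mem_filter.2 ⟨Finset.mem_univ _,
          by simpa using (Finset.mem_filter.1 hk).2⟩, by simp⟩
    rw [this]
  have hsym_g : ∀ (σ : Equiv.Perm (Fin n)) s, S.indicator f (s ∘ σ) = S.indicator f s := by
    intro σ s
    rw [Set.indicator_apply, Set.indicator_apply]
    exact if_congr (hsymS σ s) (hsym_f σ s) rfl
  have hg_int : IntegrableOn (S.indicator f) B := hintB.indicator hSmeas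
  -- value of whole-box integral of f
  have hIcc01 : ∫ x in Icc (0:ℝ) 1, E x = a + b := by
    rw [← Set.Icc_union_Ioc_eq_Icc ht0 ht1]
    rw [setIntegral_union ((Set.Iic_disjoint_Ioc le_rfl).mono_left Set.Icc_subset_Iic_self) measurableSet_Ioc hIccInt hIocInt]
  have hBf : ∫ s in B, f s = (a + b) ^ n := by
    rw [← integral_indicator hBmeas]
    have hfun : B.indicator f = fun s => ∏ j, (Icc (0:ℝ) 1).indicator E (s j) := by
      funext s
      by_cases hbox : ∀ j, s j ∈ Icc (0:ℝ) 1
      · rw [indicator_of_mem (Set.mem_univ_pi.2 hbox)]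
        rw [Finset.prod_congr rfl fun j _ => indicator_of_mem (hbox j) E]
        simp only [hf, hE]
        rw [← Real.exp_sum, Finset.mul_sum]
      · rw [indicator_of_notMem (fun hm => hbox (Set.mem_univ_pi.1 hm))]
        push_neg at hbox
        obtain ⟨j, hj⟩ := hbox
        exact (Finset.prod_eq_zero (Finset.mem_univ j) (indicator_of_notMem hj E)).symm
    rw [hfun, volume_pi (α := fun _ : Fin n => ℝ), MeasureTheory.integral_fintype_prod_eq_pow (ι := Fin n) ((Icc (0:ℝ) 1).indicator E),
      integral_indicator measurableSet_Icc, hIcc01, Fintype.card_fin]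
  have hZ : ∫ s in orderedSimplex n, f s = (n.factorial : ℝ)⁻¹ * (a + b) ^ n := by
    have := symint n f hsym_f hintB
    rw [hBf] at this
    field_simp [Nat.factorial_ne_zero] at this ⊢
    linarith [this]
  -- numerator
  have hseteq : orderedSimplex n ∩ {s : Fin n → ℝ | s ⟨i - 1, by omega⟩ ≤ t}
      = orderedSimplex n ∩ S := by
    ext s
    simp only [mem_inter_iff, mem_setOf_eq, hSdef]
    constructor
    · rintro ⟨hs, hle⟩
      exact ⟨hs, (seteq_aux n i hi hin t s hs.2).1 hle⟩
    · rintro ⟨hs, hle⟩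
      exact ⟨hs, (seteq_aux n i hi hin t s hs.2).2 hle⟩
  have hBg : ∫ s in B, S.indicator f s
      = ∑ k ∈ Finset.Icc i n, (n.choose k : ℝ) * (a ^ k * b ^ (n - k)) := by
    rw [← integral_indicator hBmeas]
    have hfun : B.indicator (S.indicator f)
        = fun s => ∑ k ∈ Finset.Icc i n, ∑ T ∈ Finset.powersetCard k Finset.univ,
            ∏ j, (if j ∈ T then (Icc (0:ℝ) t).indicator E (s j)
                  else (Ioc t (1:ℝ)).indicator E (s j)) :=
      funext fun s => pointwise_decomp l n i t ht0 ht1 s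
    rw [hfun]
    have hintT : ∀ T : Finset (Fin n), Integrable (fun s : Fin n → ℝ =>
        ∏ j, (if j ∈ T then (Icc (0:ℝ) t).indicator E (s j)
              else (Ioc t (1:ℝ)).indicator E (s j))) := by
      intro T
      have hrw : ∀ (s : Fin n → ℝ) (j : Fin n),
          (if j ∈ T then (Icc (0:ℝ) t).indicator E (s j)
                  else (Ioc t (1:ℝ)).indicator E (s j))
          = (if j ∈ T then (Icc (0:ℝ) t).indicator E else (Ioc t (1:ℝ)).indicator E) (s j) := by
        intro s j; by_cases hj : j ∈ T <;> simp [hj]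
      simp_rw [hrw]
      refine Integrable.fintype_prod (f := fun j =>
        (if j ∈ T then (Icc (0:ℝ) t).indicator E else (Ioc t (1:ℝ)).indicator E)) fun j => ?_
      by_cases hj : j ∈ T
      · simp only [hj, if_true]
        exact (integrable_indicator_iff measurableSet_Icc).2 hIccInt
      · simp only [hj, if_false]
        exact (integrable_indicator_iff measurableSet_Ioc).2 hIocInt
    rw [integral_finset_sum _ (fun k _ => integrable_finset_sum _ fun T _ => hintT T)]
    refine Finset.sum_congr rfl fun k hk => ?_
    rw [integral_finset_sum _ fun T _ => hintT T]
    have : ∀ T ∈ Finset.powersetCard k Finset.univ,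
        (∫ s : Fin n → ℝ, ∏ j, (if j ∈ T then (Icc (0:ℝ) t).indicator E (s j)
              else (Ioc t (1:ℝ)).indicator E (s j))) = a ^ k * b ^ (n - k) := by
      intro T hT
      rw [Finset.mem_powersetCard] at hT
      rw [prod_integral l t n T, hT.2, ← ha, ← hb]
    rw [Finset.sum_congr rfl this, Finset.sum_const, Finset.card_powersetCard,
      Finset.card_univ, Fintype.card_fin, nsmul_eq_mul]
  have hI : ∫ s in orderedSimplex n ∩ S, f s
      = (n.factorial : ℝ)⁻¹ * ∑ k ∈ Finset.Icc i n, (n.choose k : ℝ) * (a ^ k * b ^ (n - k)) := by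
    rw [← setIntegral_indicator hSmeas]
    have := symint n (S.indicator f) hsym_g hg_int
    rw [hBg] at this
    field_simp [Nat.factorial_ne_zero] at this ⊢
    linarith [this]
  -- algebraic facts about a, b, p
  have hcv : a + b = if l = 0 then 1 else (Real.exp l - 1)/l := by
    rw [← hIcc01]
    have := a_val l 1 zero_le_one
    simpa [hE] using this
  have hav : a = if l = 0 then t else (Real.exp (l*t) - 1)/l := a_val l t ht0
  have hcne : a + b ≠ 0 := by
    rw [hcv]
    by_cases hl : l = 0
    · simp [hl]
    · rw [if_neg hl]
      refine div_ne_zero ?_ hl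
      intro habs
      have h1 : Real.exp l = 1 := by linarith [sub_eq_zero.1 habs]
      exact hl (by rw [← Real.log_exp l, h1, Real.log_one])
  obtain ⟨c, hc⟩ : ∃ c, a + b = c := ⟨a + b, rfl⟩
  rw [hc] at hcv hcne hZ hIcc01
  have hpa : a = p * c := by
    rw [hp, piExt, hcv, hav]
    by_cases hl : l = 0
    · rw [if_pos hl, if_pos hl, if_pos hl, mul_one]
    · rw [if_neg hl, if_neg hl, if_neg hl]
      have hexp : Real.exp l - 1 ≠ 0 := by
        intro habs
        have h1 : Real.exp l = 1 := by linarith [sub_eq_zero.1 habs]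
        exact hl (by rw [← Real.log_exp l, h1, Real.log_one])
      field_simp
  have hpb : b = (1 - p) * c := by
    have hba : b = c - a := by rw [← hc]; ring
    rw [hba, hpa]; ring
  -- final assembly
  rw [hseteq, hZ, hI]
  have hterm : ∀ k ∈ Finset.Icc i n,
      (n.choose k : ℝ) * (a ^ k * b ^ (n - k))
      = ((n.choose k : ℝ) * p ^ k * (1 - p) ^ (n - k)) * c ^ n := by
    intro k hk
    rw [Finset.mem_Icc] at hk
    rw [hpa, hpb, mul_pow, mul_pow]
    have hkn : k + (n - k) = n := by omega
    calc (n.choose k : ℝ) * (p ^ k * c ^ k * ((1 - p) ^ (n - k) * c ^ (n - k)))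
        = (n.choose k : ℝ) * p ^ k * (1 - p) ^ (n - k) * (c ^ k * c ^ (n - k)) := by ring
      _ = _ := by rw [← pow_add, hkn]
  rw [Finset.sum_congr rfl hterm, ← Finset.sum_mul]
  have hfne : (n.factorial : ℝ) ≠ 0 := Nat.cast_ne_zero.2 (Nat.factorial_ne_zero n)
  have hcpow : c ^ n ≠ 0 := pow_ne_zero n hcne
  field_simp
end

section
/- Let n ≥ 1 and ξ₁,…,ξₙ : [0,1] → ℝ be continuously differentiable with ξⱼ' ≥ λ pointwise for a fixed λ ∈ ℝ. For 1 ≤ i ≤ k ≤ n and s ∈ [0,1), let Δ^{s,1}_{i,k} = {(t_i,…,t_k) : s < t_i < ⋯ < t_k < 1}. Then the map s ↦ (∫_{Δ^{s,1}_{i,k}} exp(Σ_{j=i}^{k} ξⱼ(tⱼ)) d𝐭) / (∫_{Δ^{s,1}_{i,k}} exp(λ Σ_{j=i}^{k} tⱼ) d𝐭) is non-decreasing in s. -/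
open Set Real MeasureTheory intervalIntegral

noncomputable def G : (m : ℕ) → (Fin m → ℝ → ℝ) → ℝ → ℝ
  | 0, _, _ => 1
  | (m+1), f, s => ∫ t in s..1, f 0 t * G m (fun j => f (Fin.succ j)) t

theorem G_cont : ∀ (m : ℕ) (f : Fin m → ℝ → ℝ), (∀ j, Continuous (f j)) →
    Continuous (G m f)
  | 0, f, _ => continuous_const
  | (m+1), f, hc => by
    have hh : Continuous (fun t => f 0 t * G m (fun j => f (Fin.succ j)) t) :=
      (hc 0).mul (G_cont m _ (fun j => hc j.succ))
    have : ∀ s : ℝ, HasDerivAt (G (m+1) f)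
        (-(f 0 s * G m (fun j => f (Fin.succ j)) s)) s := by
      intro s
      exact integral_hasDerivAt_left (hh.intervalIntegrable s 1)
        (hh.stronglyMeasurableAtFilter _ _) hh.continuousAt
    exact continuous_iff_continuousAt.2 fun s => (this s).differentiableAt.continuousAt

theorem G_hasDerivAt (m : ℕ) (f : Fin (m+1) → ℝ → ℝ) (hc : ∀ j, Continuous (f j)) (s : ℝ) :
    HasDerivAt (G (m+1) f) (-(f 0 s * G m (fun j => f (Fin.succ j)) s)) s := by
  have hh : Continuous (fun t => f 0 t * G m (fun j => f (Fin.succ j)) t) :=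
    (hc 0).mul (G_cont m _ (fun j => hc j.succ))
  exact integral_hasDerivAt_left (hh.intervalIntegrable s 1)
    (hh.stronglyMeasurableAtFilter _ _) hh.continuousAt

theorem G_nonneg : ∀ (m : ℕ) (f : Fin m → ℝ → ℝ), (∀ j, Continuous (f j)) →
    (∀ j x, 0 < f j x) → ∀ s, 0 ≤ s → s ≤ 1 → 0 ≤ G m f s
  | 0, f, _, _, s, _, _ => zero_le_one
  | (m+1), f, hc, hp, s, h0, h1 => by
    have hh : Continuous (fun t => f 0 t * G m (fun j => f (Fin.succ j)) t) :=
      (hc 0).mul (G_cont m _ (fun j => hc j.succ))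
    refine intervalIntegral.integral_nonneg h1 (fun x hx => ?_)
    exact mul_nonneg (hp 0 x).le
      (G_nonneg m _ (fun j => hc j.succ) (fun j x => hp j.succ x)
        x (le_trans h0 hx.1) hx.2)

theorem G_pos : ∀ (m : ℕ) (f : Fin m → ℝ → ℝ), (∀ j, Continuous (f j)) →
    (∀ j x, 0 < f j x) → ∀ s, 0 ≤ s → s < 1 → 0 < G m f s
  | 0, f, _, _, s, _, _ => zero_lt_one
  | (m+1), f, hc, hp, s, h0, h1 => by
    have hh : Continuous (fun t => f 0 t * G m (fun j => f (Fin.succ j)) t) :=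
      (hc 0).mul (G_cont m _ (fun j => hc j.succ))
    refine intervalIntegral.intervalIntegral_pos_of_pos_on
      (hh.intervalIntegrable s 1) (fun x hx => ?_) h1
    exact mul_pos (hp 0 x)
      (G_pos m _ (fun j => hc j.succ) (fun j x => hp j.succ x)
        x (le_trans h0 hx.1.le) hx.2)

theorem G_cross : ∀ (m : ℕ) (f g : Fin m → ℝ → ℝ),
    (∀ j, Continuous (f j)) → (∀ j, Continuous (g j)) →
    (∀ j x, 0 < f j x) → (∀ j x, 0 < g j x) →
    (∀ j, ∀ s t : ℝ, 0 ≤ s → s ≤ t → t ≤ 1 → f j s * g j t ≤ f j t * g j s) →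
    ∀ s t : ℝ, 0 ≤ s → s ≤ t → t ≤ 1 → G m f s * G m g t ≤ G m f t * G m g s
  | 0, f, g, _, _, _, _, _, s, t, _, _, _ => le_refl _
  | (m+1), f, g, hcf, hcg, hpf, hpg, hcross, s, t, hs0, hst, ht1 => by
    set tf := fun j => f (Fin.succ j) with htf
    set tg := fun j => g (Fin.succ j) with htg
    have hctf : ∀ j, Continuous (tf j) := fun j => hcf j.succ
    have hctg : ∀ j, Continuous (tg j) := fun j => hcg j.succ
    have hptf : ∀ j x, 0 < tf j x := fun j x => hpf j.succ x
    have hptg : ∀ j x, 0 < tg j x := fun j x => hpg j.succ x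
    have IH := G_cross m tf tg hctf hctg hptf hptg (fun j => hcross j.succ)
    -- φ is antitone on [0, t]
    set φ : ℝ → ℝ := fun x => G (m+1) f t * G (m+1) g x - G (m+1) f x * G (m+1) g t with hφ
    have hder : ∀ x : ℝ, HasDerivAt φ
        (f 0 x * G m tf x * G (m+1) g t - G (m+1) f t * (g 0 x * G m tg x)) x := by
      intro x
      have h1 := (G_hasDerivAt m g hcg x).const_mul (G (m+1) f t)
      have h2 := (G_hasDerivAt m f hcf x).mul_const (G (m+1) g t)
      have := h1.sub h2
      exact this.congr_deriv (by simp only [htf, htg]; ring)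
    have hGf : G (m+1) f t = ∫ r in t..1, f 0 r * G m tf r := rfl
    have hGg : G (m+1) g t = ∫ r in t..1, g 0 r * G m tg r := rfl
    have hhf : Continuous (fun r => f 0 r * G m tf r) := (hcf 0).mul (G_cont m tf hctf)
    have hhg : Continuous (fun r => g 0 r * G m tg r) := (hcg 0).mul (G_cont m tg hctg)
    have key : ∀ x : ℝ, 0 ≤ x → x ≤ t →
        f 0 x * G m tf x * G (m+1) g t - G (m+1) f t * (g 0 x * G m tg x) ≤ 0 := by
      intro x hx0 hxt
      have hmono : ∫ r in t..1, (f 0 x * G m tf x) * (g 0 r * G m tg r) ≤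
          ∫ r in t..1, (g 0 x * G m tg x) * (f 0 r * G m tf r) := by
        refine intervalIntegral.integral_mono_on ht1
          ((continuous_const.mul hhg).intervalIntegrable t 1)
          ((continuous_const.mul hhf).intervalIntegrable t 1) (fun r hr => ?_)
        have hxr : x ≤ r := le_trans hxt hr.1
        have h1 := hcross 0 x r hx0 hxr hr.2
        have h2 := IH x r hx0 hxr hr.2
        have hB : 0 ≤ G m tf x * G m tg r :=
          mul_nonneg (G_nonneg m tf hctf hptf x hx0 (le_trans hxt ht1))
            (G_nonneg m tg hctg hptg r (le_trans hx0 hxr) hr.2)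
        have hA : 0 ≤ f 0 r * g 0 x := mul_nonneg (hpf 0 r).le (hpg 0 x).le
        calc f 0 x * G m tf x * (g 0 r * G m tg r)
            = (f 0 x * g 0 r) * (G m tf x * G m tg r) := by ring
          _ ≤ (f 0 r * g 0 x) * (G m tf r * G m tg x) := mul_le_mul h1 h2 hB hA
          _ = g 0 x * G m tg x * (f 0 r * G m tf r) := by ring
      rw [intervalIntegral.integral_const_mul, intervalIntegral.integral_const_mul] at hmono
      rw [hGf, hGg]
      linarith
    have hanti : AntitoneOn φ (Icc 0 t) := by
      refine antitoneOn_of_deriv_nonpos (convex_Icc 0 t)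
        (Continuous.continuousOn (continuous_iff_continuousAt.2
          fun x => (hder x).differentiableAt.continuousAt))
        (fun x hx => (hder x).differentiableAt.differentiableWithinAt) (fun x hx => ?_)
      rw [interior_Icc] at hx
      rw [(hder x).deriv]
      exact key x hx.1.le hx.2.le
    have h1 : φ s ≥ φ t := hanti ⟨hs0, hst⟩ ⟨le_trans hs0 hst, le_refl t⟩ hst
    have h2 : φ t = 0 := sub_self _
    simp only [hφ] at h1 h2
    linarith

/-- The open simplex of strictly increasing tuples in `(s,1)`. -/
def openSimplexIn (m : ℕ) (s : ℝ) : Set (Fin m → ℝ) :=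
  {u | (∀ j, s < u j ∧ u j < 1) ∧ StrictMono u}

theorem measurableSet_strictMono (m : ℕ) :
    MeasurableSet {u : Fin m → ℝ | StrictMono u} := by
  have : {u : Fin m → ℝ | StrictMono u} =
      ⋂ (a : Fin m), ⋂ (b : Fin m), {u | a < b → u a < u b} := by
    ext u
    simp only [mem_iInter, mem_setOf_eq]
    exact ⟨fun h a b hab => h hab, fun h a b hab => h a b hab⟩
  rw [this]
  refine MeasurableSet.iInter fun a => MeasurableSet.iInter fun b => ?_
  by_cases hab : a < b
  · simp only [hab, forall_true_left]
    exact measurableSet_lt (measurable_pi_apply a) (measurable_pi_apply b)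
  · simp only [hab, false_implies, setOf_true]
    exact MeasurableSet.univ


theorem measurableSet_openSimplexIn (m : ℕ) (s : ℝ) :
    MeasurableSet (openSimplexIn m s) := by
  have : openSimplexIn m s =
      (⋂ j, ({u : Fin m → ℝ | s < u j} ∩ {u | u j < 1})) ∩ {u | StrictMono u} := by
    ext u
    constructor
    · rintro ⟨h1, h2⟩
      exact ⟨mem_iInter.2 fun j => ⟨(h1 j).1, (h1 j).2⟩, h2⟩
    · rintro ⟨h1, h2⟩
      exact ⟨fun j => ⟨(mem_iInter.1 h1 j).1, (mem_iInter.1 h1 j).2⟩, h2⟩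
  rw [this]
  exact (MeasurableSet.iInter fun j =>
    (measurableSet_lt measurable_const (measurable_pi_apply j)).inter
      (measurableSet_lt (measurable_pi_apply j) measurable_const)).inter
    (measurableSet_strictMono m)

theorem setIntegral_openSimplexIn :
    ∀ (m : ℕ) (f : Fin m → ℝ → ℝ), (∀ j, Continuous (f j)) →
    ∀ s : ℝ, 0 ≤ s → s ≤ 1 →
    (∫ u in openSimplexIn m s, ∏ j, f j (u j)) = G m f s
  | 0, f, _, s, _, _ => by
    have huniv : openSimplexIn 0 s = univ :=
      eq_univ_of_forall fun u => ⟨fun j => j.elim0, fun a b _ => a.elim0⟩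
    rw [huniv]
    show _ = (1:ℝ)
    simp [Measure.real, volume_pi, Measure.pi_univ]
  | (m+1), f, hc, s, hs0, hs1 => by
    set tf := fun j => f (Fin.succ j) with htf
    have hctf : ∀ j, Continuous (tf j) := fun j => hc j.succ
    set e := MeasurableEquiv.piFinSuccAbove (fun _ : Fin (m+1) => ℝ) 0 with he
    set T : Set (ℝ × (Fin m → ℝ)) := {p | p.1 ∈ Ioo s 1 ∧ p.2 ∈ openSimplexIn m p.1} with hT
    set Fp : ℝ × (Fin m → ℝ) → ℝ := fun p => f 0 p.1 * ∏ j, tf j (p.2 j) with hFp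
    have hmp : MeasurePreserving e volume volume :=
      volume_preserving_piFinSuccAbove (fun _ => ℝ) 0
    have hTmeas : MeasurableSet T := by
      have : T = (Prod.fst ⁻¹' Ioo s 1) ∩
          ((⋂ j, ({p : ℝ × (Fin m → ℝ) | p.1 < p.2 j} ∩ {p | p.2 j < 1})) ∩
            (Prod.snd ⁻¹' {u : Fin m → ℝ | StrictMono u})) := by
        ext p
        simp only [hT, mem_inter_iff, mem_iInter, mem_preimage, mem_setOf_eq, openSimplexIn]
      rw [this]
      exact (measurable_fst measurableSet_Ioo).inter
        ((MeasurableSet.iInter fun j =>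
          (measurableSet_lt measurable_fst ((measurable_pi_apply j).comp measurable_snd)).inter
            (measurableSet_lt ((measurable_pi_apply j).comp measurable_snd) measurable_const)).inter
          (measurable_snd (measurableSet_strictMono m)))
    have hpre : openSimplexIn (m+1) s = e ⁻¹' T := by
      ext u
      show ((∀ j, s < u j ∧ u j < 1) ∧ StrictMono u) ↔
        ((s < u 0 ∧ u 0 < 1) ∧ (∀ j : Fin m, u 0 < u (Fin.succ j) ∧ u (Fin.succ j) < 1) ∧
          StrictMono (fun j : Fin m => u j.succ))
      constructor
      · rintro ⟨h1, h2⟩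
        refine ⟨⟨(h1 0).1, (h1 0).2⟩, fun j => ⟨h2 (Fin.succ_pos j), (h1 j.succ).2⟩,
          h2.comp Fin.strictMono_succ⟩
      · rintro ⟨h1, h2, h3⟩
        constructor
        · intro j
          refine Fin.cases ⟨h1.1, h1.2⟩ (fun j => ⟨lt_trans h1.1 (h2 j).1, (h2 j).2⟩) j
        · intro a b hab
          refine Fin.cases (fun hb => ?_) (fun a hb => ?_) a hab
          · refine Fin.cases (fun h => absurd h (lt_irrefl _)) (fun b _ => (h2 b).1) b hb
          · refine Fin.cases (fun h => absurd h (Fin.not_lt_zero _)) (fun b hb => ?_) b hb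
            exact h3 (Fin.succ_lt_succ_iff.1 hb)
    have hFpe : ∀ u : Fin (m+1) → ℝ, (∏ j, f j (u j)) = Fp (e u) := by
      intro u
      have heu : e u = (u 0, fun j => u j.succ) := rfl
      rw [heu, hFp, Fin.prod_univ_succ]
    have hFpcont : Continuous Fp :=
      ((hc 0).comp continuous_fst).mul
        (continuous_finset_prod _ fun j _ =>
          (hctf j).comp ((continuous_apply j).comp continuous_snd))
    have hint : IntegrableOn Fp T (volume.prod volume) := by
      have hsub : T ⊆ Icc s 1 ×ˢ Icc (fun _ => s) (fun _ => (1:ℝ)) := by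
        rintro p ⟨h1, h2, _⟩
        refine ⟨⟨h1.1.le, h1.2.le⟩, ?_, ?_⟩ <;> intro j
        · exact le_trans h1.1.le (h2 j).1.le
        · exact (h2 j).2.le
      refine IntegrableOn.mono_set ?_ hsub
      rw [show ((volume : Measure ℝ).prod (volume : Measure (Fin m → ℝ))) = volume from rfl]
      exact hFpcont.continuousOn.integrableOn_compact (isCompact_Icc.prod isCompact_Icc)
    calc ∫ u in openSimplexIn (m+1) s, ∏ j, f j (u j)
        = ∫ u in e ⁻¹' T, Fp (e u) := by
          rw [hpre, show (fun u => ∏ j, f j (u j)) = fun u => Fp (e u) from funext hFpe]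
      _ = ∫ p in T, Fp p ∂(volume.prod volume) :=
          hmp.setIntegral_preimage_emb e.measurableEmbedding Fp T
      _ = ∫ p, T.indicator Fp p ∂(volume.prod volume) := (MeasureTheory.integral_indicator hTmeas).symm
      _ = ∫ t, ∫ v, T.indicator Fp (t, v) :=
          integral_prod _ ((integrable_indicator_iff hTmeas).2 hint)
      _ = ∫ t, (Ioo s 1).indicator
            (fun t => f 0 t * ∫ v in openSimplexIn m t, ∏ j, tf j (v j)) t := by
          refine integral_congr_ae (Filter.Eventually.of_forall fun t => ?_)
          show ∫ v, T.indicator Fp (t, v) = _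
          by_cases ht : t ∈ Ioo s 1
          · rw [indicator_of_mem ht]
            have hptw : ∀ v, T.indicator Fp (t, v) =
                (openSimplexIn m t).indicator (fun v => f 0 t * ∏ j, tf j (v j)) v := by
              intro v
              by_cases hv : v ∈ openSimplexIn m t
              · rw [indicator_of_mem (show (t,v) ∈ T from ⟨ht, hv⟩),
                  indicator_of_mem hv]
              · rw [indicator_of_notMem (fun h => hv h.2), indicator_of_notMem hv]
            rw [show (fun v => T.indicator Fp (t, v)) = fun v =>
              (openSimplexIn m t).indicator (fun v => f 0 t * ∏ j, tf j (v j)) v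
              from funext hptw]
            rw [MeasureTheory.integral_indicator (measurableSet_openSimplexIn m t),
              MeasureTheory.integral_const_mul (f 0 t) _]
          · rw [indicator_of_notMem ht]
            have hptw : ∀ v, T.indicator Fp (t, v) = 0 :=
              fun v => indicator_of_notMem (fun h => ht h.1) _
            rw [show (fun v => T.indicator Fp (t, v)) = fun _ => 0 from funext hptw]
            simp
      _ = ∫ t in Ioo s 1, f 0 t * ∫ v in openSimplexIn m t, ∏ j, tf j (v j) :=
          MeasureTheory.integral_indicator measurableSet_Ioo
      _ = ∫ t in Ioo s 1, f 0 t * G m tf t := by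
          refine setIntegral_congr_fun measurableSet_Ioo (fun t ht => ?_)
          rw [setIntegral_openSimplexIn m tf hctf t (le_trans hs0 ht.1.le) ht.2.le]
      _ = ∫ t in Ioc s 1, f 0 t * G m tf t := by
          rw [integral_Ioc_eq_integral_Ioo]
      _ = ∫ t in s..1, f 0 t * G m tf t := (intervalIntegral.integral_of_le hs1).symm
      _ = G (m+1) f s := rfl

theorem stmt_8 (n : ℕ) (hn : 1 ≤ n) (l : ℝ) (ξ : Fin n → ℝ → ℝ)
    (hC1 : ∀ j, ContDiff ℝ 1 (ξ j))
    (hder : ∀ j, ∀ s ∈ Icc (0:ℝ) 1, l ≤ deriv (ξ j) s)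
    (i k : ℕ) (hi : 1 ≤ i) (hik : i ≤ k) (hkn : k ≤ n) :
    MonotoneOn (fun s =>
      (∫ u in openSimplexIn (k - i + 1) s,
          Real.exp (∑ j : Fin (k - i + 1), ξ ⟨i - 1 + j, by omega⟩ (u j))) /
      (∫ u in openSimplexIn (k - i + 1) s,
          Real.exp (l * ∑ j : Fin (k - i + 1), u j))) (Ico 0 1) := by
  set m := k - i + 1 with hm
  set F : Fin m → ℝ → ℝ := fun j x => Real.exp (ξ ⟨i - 1 + j, by omega⟩ x) with hF
  set Gd : Fin m → ℝ → ℝ := fun _ x => Real.exp (l * x) with hGd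
  have hcF : ∀ j, Continuous (F j) :=
    fun j => Real.continuous_exp.comp (hC1 _).continuous
  have hcG : ∀ j, Continuous (Gd j) :=
    fun j => Real.continuous_exp.comp (continuous_const.mul continuous_id)
  have hpF : ∀ j x, 0 < F j x := fun j x => Real.exp_pos _
  have hpG : ∀ j x, 0 < Gd j x := fun j x => Real.exp_pos _
  have hcross : ∀ j, ∀ s t : ℝ, 0 ≤ s → s ≤ t → t ≤ 1 →
      F j s * Gd j t ≤ F j t * Gd j s := by
    intro j s t hs0 hst ht1
    set a : Fin n := ⟨i - 1 + j, by omega⟩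
    have hmono : MonotoneOn (fun x => ξ a x - l * x) (Icc 0 1) := by
      refine monotoneOn_of_deriv_nonneg (convex_Icc 0 1)
        (((hC1 a).continuous.sub (continuous_const.mul continuous_id)).continuousOn)
        (fun x _ => (((hC1 a).differentiable one_ne_zero x).sub
          ((differentiable_const l).mul differentiable_id x)).differentiableWithinAt)
        (fun x hx => ?_)
      rw [interior_Icc] at hx
      have hda : HasDerivAt (fun x => ξ a x - l * x) (deriv (ξ a) x - l * 1) x :=
        (((hC1 a).differentiable one_ne_zero x).hasDerivAt).sub ((hasDerivAt_id x).const_mul l)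
      rw [mul_one] at hda
      rw [hda.deriv, sub_nonneg]
      exact hder a x ⟨hx.1.le, hx.2.le⟩
    have h := hmono ⟨hs0, le_trans hst ht1⟩ ⟨le_trans hs0 hst, ht1⟩ hst
    simp only [hF, hGd, ← Real.exp_add]
    rw [Real.exp_le_exp]
    dsimp only at h ⊢
    linarith
  have hnum : ∀ x : ℝ, 0 ≤ x → x ≤ 1 →
      (∫ u in openSimplexIn m x,
        Real.exp (∑ j : Fin m, ξ ⟨i - 1 + j, by omega⟩ (u j))) = G m F x := by
    intro x h0 h1
    rw [← setIntegral_openSimplexIn m F hcF x h0 h1]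
    refine setIntegral_congr_fun (measurableSet_openSimplexIn m x) fun u _ => ?_
    rw [Real.exp_sum]
  have hden : ∀ x : ℝ, 0 ≤ x → x ≤ 1 →
      (∫ u in openSimplexIn m x,
        Real.exp (l * ∑ j : Fin m, u j)) = G m Gd x := by
    intro x h0 h1
    rw [← setIntegral_openSimplexIn m Gd hcG x h0 h1]
    refine setIntegral_congr_fun (measurableSet_openSimplexIn m x) fun u _ => ?_
    rw [Finset.mul_sum, Real.exp_sum]
  intro s hs t ht hst
  simp only
  rw [hnum s hs.1 hs.2.le, hnum t ht.1 ht.2.le, hden s hs.1 hs.2.le, hden t ht.1 ht.2.le]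
  rw [div_le_div_iff₀ (G_pos m Gd hcG hpG s hs.1 hs.2) (G_pos m Gd hcG hpG t ht.1 ht.2)]
  exact G_cross m F Gd hcF hcG hpF hpG hcross s t hs.1 hst ht.2.le
end
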